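/- (Candidate sets suffice for optimal RS-repairs.) Let R be a relation, Δ a finite set of FDs, ρ a representation constraint, and C a candidate set for (R, Δ). For a relation S, let m(S, ρ) denote the maximum cardinality of a subset of S satisfying ρ. Then max_{R' ∈ C} m(R', ρ) equals the maximum cardinality of an RS-repair of R w.r.t. Δ and ρ. In particular, taking for each R' ∈ C a maximum-size ρ-satisfying subset and returning the largest of these yields an optimal (maximum-size) RS-repair of R. -/
import Mathlib


/-- The number of tuples in the relation `R` whose sensitive attribute `s` has value `v`. -/
def countVal {ι V : Type*} [DecidableEq V] (s : ι) (R : Finset (ι → V)) (v : V) : ℕ :=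
  (R.filter fun t => t s = v).card

/-- `R` satisfies the representation constraint `ρ` on the sensitive attribute `s`. -/
def satRC {ι V : Type*} [DecidableEq V] (s : ι) (ρ : V →₀ ℚ) (R : Finset (ι → V)) : Prop :=
  ∀ v : V, ρ v * (R.card : ℚ) ≤ (countVal s R v : ℚ)

/-- `R` satisfies the functional dependency `f = (X, A)`. -/
def satFD {ι V : Type*} (R : Finset (ι → V)) (f : Finset ι × ι) : Prop :=
  ∀ t₁ ∈ R, ∀ t₂ ∈ R, (∀ a ∈ f.1, t₁ a = t₂ a) → t₁ f.2 = t₂ f.2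

/-- `R` satisfies the finite set `Δ` of functional dependencies. -/
def satFDs {ι V : Type*} (Δ : Finset (Finset ι × ι)) (R : Finset (ι → V)) : Prop :=
  ∀ f ∈ Δ, satFD R f

/-- `R₁` is representatively equivalent to `R₂`. -/
def reprEquiv {ι V : Type*} [DecidableEq V] (s : ι) (R₁ R₂ : Finset (ι → V)) : Prop :=
  ∀ v : V, countVal s R₁ v = countVal s R₂ v

/-- `R₁` representatively dominates `R₂`. -/
def reprDom {ι V : Type*} [DecidableEq V] (s : ι) (R₁ R₂ : Finset (ι → V)) : Prop :=
  (∀ v : V, countVal s R₂ v ≤ countVal s R₁ v) ∧ ∃ v : V, countVal s R₂ v < countVal s R₁ v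

/-- `C` is a candidate set for `(R, Δ)`: a set of S-repairs of `R` w.r.t. `Δ` such that
no two distinct members are representatively equivalent, no member representatively
dominates another, and every S-repair of `R` w.r.t. `Δ` is representatively equivalent
to, or representatively dominated by, some member of `C`. -/
def IsCandidateSet {ι V : Type*} [DecidableEq V] (s : ι) (R : Finset (ι → V))
    (Δ : Finset (Finset ι × ι)) (C : Set (Finset (ι → V))) : Prop :=
  (∀ R' ∈ C, R' ⊆ R ∧ satFDs Δ R') ∧
  (∀ R₁ ∈ C, ∀ R₂ ∈ C, R₁ ≠ R₂ → ¬ reprEquiv s R₁ R₂ ∧ ¬ reprDom s R₁ R₂) ∧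
  (∀ R'' ⊆ R, satFDs Δ R'' → ∃ R' ∈ C, reprEquiv s R' R'' ∨ reprDom s R' R'')

/-- The maximum cardinality of a subset of `S` satisfying the representation
constraint `ρ` (written `m(S, ρ)` in the paper). -/
noncomputable def maxSat {ι V : Type*} [DecidableEq V] (s : ι) (ρ : V →₀ ℚ)
    (S : Finset (ι → V)) : ℕ :=
  sSup {n : ℕ | ∃ S' ⊆ S, satRC s ρ S' ∧ S'.card = n}

lemma countVal_mono {ι V : Type*} [DecidableEq V] (s : ι) {S' S : Finset (ι → V)}
    (h : S' ⊆ S) (v : V) : countVal s S' v ≤ countVal s S v :=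
  Finset.card_le_card (Finset.filter_subset_filter _ h)

lemma countVal_eq_zero {ι V : Type*} [DecidableEq V] (s : ι) {S : Finset (ι → V)} {v : V}
    (h : v ∉ S.image (fun t => t s)) : countVal s S v = 0 := by
  rw [countVal, Finset.card_eq_zero, Finset.filter_eq_empty_iff]
  intro t ht hts
  exact h (Finset.mem_image.2 ⟨t, ht, hts⟩)

lemma card_eq_sum_countVal {ι V : Type*} [DecidableEq V] (s : ι) {S : Finset (ι → V)}
    {W : Finset V} (h : S.image (fun t => t s) ⊆ W) :
    S.card = ∑ v ∈ W, countVal s S v := by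
  rw [Finset.card_eq_sum_card_image (fun t => t s) S]
  exact Finset.sum_subset h (fun v _ hv => countVal_eq_zero s hv)

lemma card_eq_of_counts {ι V : Type*} [DecidableEq V] (s : ι) {S₁ S₂ : Finset (ι → V)}
    (h : ∀ v, countVal s S₁ v = countVal s S₂ v) : S₁.card = S₂.card := by
  have h1 := card_eq_sum_countVal (S := S₁) s
    (Finset.subset_union_left (s₁ := S₁.image (fun t => t s)) (s₂ := S₂.image (fun t => t s)))
  have h2 := card_eq_sum_countVal (S := S₂) s
    (Finset.subset_union_right (s₁ := S₁.image (fun t => t s)) (s₂ := S₂.image (fun t => t s)))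
  rw [h1, h2]
  exact Finset.sum_congr rfl (fun v _ => h v)

lemma exists_subset_counts {ι V : Type*} [DecidableEq V] (s : ι) {R' R'' : Finset (ι → V)}
    (h : ∀ v, countVal s R'' v ≤ countVal s R' v) :
    ∃ S' ⊆ R', ∀ v, countVal s S' v = countVal s R'' v := by
  classical
  have hT : ∀ v : V, ∃ T ⊆ R'.filter (fun t => t s = v), T.card = countVal s R'' v :=
    fun v => Finset.exists_subset_card_eq (h v)
  choose T hTsub hTcard using hT
  refine ⟨(R''.image (fun t => t s)).biUnion T, ?_, ?_⟩
  · intro t ht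
    obtain ⟨v, _, htv⟩ := Finset.mem_biUnion.1 ht
    exact (Finset.filter_subset _ _) (hTsub v htv)
  · intro v
    have hfil : ((R''.image (fun t => t s)).biUnion T).filter (fun t => t s = v)
        = if v ∈ R''.image (fun t => t s) then T v else ∅ := by
      ext t
      simp only [Finset.mem_filter, Finset.mem_biUnion]
      constructor
      · rintro ⟨⟨w, hw, htw⟩, hts⟩
        have hwv : w = v := by rw [← hts, (Finset.mem_filter.1 (hTsub w htw)).2]
        subst hwv
        rw [if_pos hw]; exact htw
      · intro ht
        by_cases hv : v ∈ R''.image (fun t => t s)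
        · rw [if_pos hv] at ht
          exact ⟨⟨v, hv, ht⟩, (Finset.mem_filter.1 (hTsub v ht)).2⟩
        · rw [if_neg hv] at ht; exact absurd ht (Finset.notMem_empty t)
    rw [countVal, hfil]
    by_cases hv : v ∈ R''.image (fun t => t s)
    · rw [if_pos hv]; exact hTcard v
    · rw [if_neg hv, Finset.card_empty, countVal_eq_zero s hv]

lemma satFDs_subset {ι V : Type*} {Δ : Finset (Finset ι × ι)} {S' S : Finset (ι → V)}
    (hsub : S' ⊆ S) (h : satFDs Δ S) : satFDs Δ S' :=
  fun f hf t₁ ht₁ t₂ ht₂ => h f hf t₁ (hsub ht₁) t₂ (hsub ht₂)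

lemma satFDs_empty {ι V : Type*} (Δ : Finset (Finset ι × ι)) :
    satFDs Δ (∅ : Finset (ι → V)) :=
  fun _ _ t₁ ht₁ => absurd ht₁ (Finset.notMem_empty t₁)

lemma satRC_empty {ι V : Type*} [DecidableEq V] (s : ι) (ρ : V →₀ ℚ) :
    satRC s ρ (∅ : Finset (ι → V)) := by
  intro v; simp [countVal]

lemma maxSat_attained {ι V : Type*} [DecidableEq V] (s : ι) (ρ : V →₀ ℚ)
    (S : Finset (ι → V)) :
    ∃ S' ⊆ S, satRC s ρ S' ∧ S'.card = maxSat s ρ S := by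
  have hne : {n : ℕ | ∃ S' ⊆ S, satRC s ρ S' ∧ S'.card = n}.Nonempty :=
    ⟨0, ∅, Finset.empty_subset S, satRC_empty s ρ, Finset.card_empty⟩
  have hbdd : BddAbove {n : ℕ | ∃ S' ⊆ S, satRC s ρ S' ∧ S'.card = n} := by
    refine ⟨S.card, ?_⟩
    rintro n ⟨S', hsub, _, rfl⟩
    exact Finset.card_le_card hsub
  exact Nat.sSup_mem hne hbdd

/-- Candidate sets suffice for computing optimal RS-repairs: the maximum over the
candidates `R' ∈ C` of the maximum size `m(R', ρ)` of a `ρ`-satisfying subset of `R'`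
equals the maximum cardinality of an RS-repair of `R` w.r.t. `Δ` and `ρ`. -/
theorem candidate_set_suffices {ι V : Type*} [DecidableEq V]
    (s : ι) (R : Finset (ι → V)) (Δ : Finset (Finset ι × ι))
    (hleg : ∀ f ∈ Δ, f.2 ∉ f.1)
    (ρ : V →₀ ℚ) (h0 : ∀ v, 0 ≤ ρ v) (h1 : ∀ v, ρ v ≤ 1)
    (hsum : ∑ v ∈ ρ.support, ρ v ≤ 1)
    (C : Set (Finset (ι → V))) (hC : IsCandidateSet s R Δ C) :
    sSup {n : ℕ | ∃ R' ∈ C, maxSat s ρ R' = n} =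
      sSup {n : ℕ | ∃ R' ⊆ R, satFDs Δ R' ∧ satRC s ρ R' ∧ R'.card = n} := by
  obtain ⟨hmem, -, hcov⟩ := hC
  have hAne : {n : ℕ | ∃ R' ∈ C, maxSat s ρ R' = n}.Nonempty := by
    obtain ⟨R', hR', -⟩ := hcov ∅ (Finset.empty_subset R) (satFDs_empty Δ)
    exact ⟨maxSat s ρ R', R', hR', rfl⟩
  have hBne : {n : ℕ | ∃ R' ⊆ R, satFDs Δ R' ∧ satRC s ρ R' ∧ R'.card = n}.Nonempty :=
    ⟨0, ∅, Finset.empty_subset R, satFDs_empty Δ, satRC_empty s ρ, Finset.card_empty⟩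
  have hmaxle : ∀ S : Finset (ι → V), maxSat s ρ S ≤ S.card := by
    intro S
    obtain ⟨S', hsub, -, hcard⟩ := maxSat_attained s ρ S
    exact hcard ▸ Finset.card_le_card hsub
  have hAbdd : BddAbove {n : ℕ | ∃ R' ∈ C, maxSat s ρ R' = n} := by
    refine ⟨R.card, ?_⟩
    rintro n ⟨R', hR', rfl⟩
    exact (hmaxle R').trans (Finset.card_le_card (hmem R' hR').1)
  have hBbdd : BddAbove {n : ℕ | ∃ R' ⊆ R, satFDs Δ R' ∧ satRC s ρ R' ∧ R'.card = n} := by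
    refine ⟨R.card, ?_⟩
    rintro n ⟨R', hsub, -, -, rfl⟩
    exact Finset.card_le_card hsub
  apply le_antisymm
  · apply csSup_le hAne
    rintro n ⟨R', hR'C, rfl⟩
    obtain ⟨S', hsub, hrc, hcard⟩ := maxSat_attained s ρ R'
    exact le_csSup hBbdd ⟨S', hsub.trans (hmem R' hR'C).1,
      satFDs_subset hsub (hmem R' hR'C).2, hrc, hcard⟩
  · apply csSup_le hBne
    rintro n ⟨R'', hsub, hfd, hrc, rfl⟩
    obtain ⟨R', hR'C, hor⟩ := hcov R'' hsub hfd
    have hle : ∀ v, countVal s R'' v ≤ countVal s R' v := by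
      rcases hor with heq | hdom
      · exact fun v => (heq v).ge
      · exact hdom.1
    obtain ⟨S', hS'sub, hS'counts⟩ := exists_subset_counts s hle
    have hcards : S'.card = R''.card := card_eq_of_counts s hS'counts
    have hS'rc : satRC s ρ S' := fun v => by
      rw [hS'counts v, hcards]; exact hrc v
    have hmaxbdd : BddAbove {n : ℕ | ∃ T ⊆ R', satRC s ρ T ∧ T.card = n} := by
      refine ⟨R'.card, ?_⟩
      rintro n ⟨T, hT, -, rfl⟩
      exact Finset.card_le_card hT
    have h1 : R''.card ≤ maxSat s ρ R' := by
      rw [← hcards]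
      exact le_csSup hmaxbdd ⟨S', hS'sub, hS'rc, rfl⟩
    exact h1.trans (le_csSup hAbdd ⟨R', hR'C, rfl⟩)
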